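/- arXiv:1906.02149 — 2 statements merged into one kernel-verified Lean document; each statement's English description precedes it below -/
import Mathlib

section
/- Let φ: S → T be a premorphism between restriction semigroups. Then: (1) φ satisfies (Sr) (φ(s)φ(t) = φ(st)φ(t)^* for all s, t) if and only if φ satisfies (LSr) (φ(s t^+)φ(t) = φ(st)φ(t)^* for all s, t) and (OP) (s ≤ t implies φ(s) ≤ φ(t)); (2) φ satisfies (Sl) (φ(s)φ(t) = φ(s)^+ φ(st) for all s, t) if and only if φ satisfies (LSl) (φ(s)φ(s^* t) = φ(s)^+ φ(st) for all s, t) and (OP). Consequently, φ is strong if and only if it is locally strong and order-preserving. -/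
/-- A (two-sided) restriction semigroup: a semigroup with unary operations
`rstar` (`x ↦ x^*`) and `rplus` (`x ↦ x^+`) satisfying the standard identities. -/
class RestrictionSemigroup (S : Type*) extends Semigroup S where
  rstar : S → S
  rplus : S → S
  rplus_mul_self : ∀ x : S, rplus x * x = x
  rplus_comm : ∀ x y : S, rplus x * rplus y = rplus y * rplus x
  rplus_rplus_mul : ∀ x y : S, rplus (rplus x * y) = rplus x * rplus y
  mul_rplus : ∀ x y : S, rplus (x * y) * x = x * rplus y
  mul_rstar_self : ∀ x : S, x * rstar x = x
  rstar_comm : ∀ x y : S, rstar x * rstar y = rstar y * rstar x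
  rstar_mul_rstar : ∀ x y : S, rstar (x * rstar y) = rstar x * rstar y
  rstar_mul : ∀ x y : S, y * rstar (x * y) = rstar x * y
  rstar_rplus : ∀ x : S, rstar (rplus x) = rplus x
  rplus_rstar : ∀ x : S, rplus (rstar x) = rstar x

open RestrictionSemigroup

/-- `e` is a projection: `e ∈ P(S) = {s^* : s ∈ S}`. -/
def IsProj {S : Type*} [RestrictionSemigroup S] (e : S) : Prop :=
  ∃ s : S, rstar s = e

/-- The natural partial order: `s ≤ t` iff `s = t f` for some projection `f`. -/
def rle {S : Type*} [RestrictionSemigroup S] (s t : S) : Prop :=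
  ∃ f : S, IsProj f ∧ s = t * f

/-- Compatibility: `s ∼ t` iff `s t^* = t s^*` and `t^+ s = s^+ t`. -/
def compat {S : Type*} [RestrictionSemigroup S] (s t : S) : Prop :=
  s * rstar t = t * rstar s ∧ rplus t * s = rplus s * t

section Aux
variable {S : Type*} [RestrictionSemigroup S]

lemma isProj_rstar (x : S) : IsProj (rstar x) := ⟨x, rfl⟩

lemma isProj_rplus (x : S) : IsProj (rplus x) := ⟨rplus x, rstar_rplus x⟩

lemma proj_rstar {e : S} (he : IsProj e) : rstar e = e := by
  obtain ⟨g, rfl⟩ := he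
  rw [← rplus_rstar g, rstar_rplus]

lemma proj_rplus {e : S} (he : IsProj e) : rplus e = e := by
  obtain ⟨g, rfl⟩ := he; exact rplus_rstar g

lemma isProj_mul {e f : S} (he : IsProj e) (hf : IsProj f) : IsProj (e * f) := by
  obtain ⟨a, rfl⟩ := he
  obtain ⟨b, rfl⟩ := hf
  exact ⟨a * rstar b, rstar_mul_rstar a b⟩

lemma proj_mul_comm {e : S} (he : IsProj e) (x : S) : e * x = x * rstar (e * x) := by
  rw [rstar_mul, proj_rstar he]

lemma rle_rstar_eq {s t : S} (h : rle s t) : s = t * rstar s := by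
  obtain ⟨f, hf, rfl⟩ := h
  have h1 : rstar (t * f) = rstar t * f := by
    conv_lhs => rw [← proj_rstar hf]
    rw [rstar_mul_rstar, proj_rstar hf]
  rw [h1, ← mul_assoc, mul_rstar_self]

lemma rle_rplus_eq {s t : S} (h : rle s t) : s = rplus s * t := by
  obtain ⟨f, hf, rfl⟩ := h
  rw [mul_rplus, proj_rplus hf]

lemma rle_of_left {s t e : S} (he : IsProj e) (h : s = e * t) : rle s t := by
  refine ⟨rstar s, isProj_rstar s, ?_⟩
  subst h
  rw [rstar_mul, proj_rstar he]

lemma rle_refl (a : S) : rle a a := ⟨rstar a, isProj_rstar a, (mul_rstar_self a).symm⟩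

lemma rle_trans {a b c : S} (h1 : rle a b) (h2 : rle b c) : rle a c := by
  obtain ⟨f, hf, rfl⟩ := h1
  obtain ⟨g, hg, rfl⟩ := h2
  exact ⟨g * f, isProj_mul hg hf, mul_assoc _ _ _⟩

lemma rle_antisymm {a b : S} (h1 : rle a b) (h2 : rle b a) : a = b := by
  have ha := rle_rstar_eq h1
  have hb := rle_rstar_eq h2
  calc a = b * rstar a := ha
    _ = a * rstar b * rstar a := by rw [← hb]
    _ = a * (rstar a * rstar b) := by rw [mul_assoc, rstar_comm]
    _ = a * rstar a * rstar b := by rw [mul_assoc]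
    _ = a * rstar b := by rw [mul_rstar_self]
    _ = b := hb.symm

lemma rle_mul_right {a b : S} (c : S) (h : rle a b) : rle (a * c) (b * c) := by
  obtain ⟨f, hf, rfl⟩ := h
  refine ⟨rstar (f * c), isProj_rstar _, ?_⟩
  rw [mul_assoc, mul_assoc, ← proj_mul_comm hf]

lemma rle_mul_left {a b : S} (c : S) (h : rle a b) : rle (c * a) (c * b) := by
  obtain ⟨f, hf, rfl⟩ := h
  exact ⟨f, hf, (mul_assoc _ _ _).symm⟩

end Aux

theorem stmt12 {S T : Type*} [RestrictionSemigroup S] [RestrictionSemigroup T]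
    (φ : S → T)
    (hPM1 : ∀ s t : S, rle (φ s * φ t) (φ (s * t)))
    (hPM2 : ∀ s : S, rle (rstar (φ s)) (φ (rstar s)))
    (hPM3 : ∀ s : S, rle (rplus (φ s)) (φ (rplus s))) :
    ((∀ s t : S, φ s * φ t = φ (s * t) * rstar (φ t)) ↔
      ((∀ s t : S, φ (s * rplus t) * φ t = φ (s * t) * rstar (φ t)) ∧
        (∀ s t : S, rle s t → rle (φ s) (φ t)))) ∧
    ((∀ s t : S, φ s * φ t = rplus (φ s) * φ (s * t)) ↔
      ((∀ s t : S, φ s * φ (rstar s * t) = rplus (φ s) * φ (s * t)) ∧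
        (∀ s t : S, rle s t → rle (φ s) (φ t)))) ∧
    (((∀ s t : S, φ s * φ t = φ (s * t) * rstar (φ t)) ∧
        (∀ s t : S, φ s * φ t = rplus (φ s) * φ (s * t))) ↔
      ((∀ s t : S, φ (s * rplus t) * φ t = φ (s * t) * rstar (φ t)) ∧
        (∀ s t : S, φ s * φ (rstar s * t) = rplus (φ s) * φ (s * t)) ∧
        (∀ s t : S, rle s t → rle (φ s) (φ t)))) := by
  have hpart1 : (∀ s t : S, φ s * φ t = φ (s * t) * rstar (φ t)) ↔
      ((∀ s t : S, φ (s * rplus t) * φ t = φ (s * t) * rstar (φ t)) ∧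
        (∀ s t : S, rle s t → rle (φ s) (φ t))) := by
    constructor
    · intro hSr
      constructor
      · intro s t
        rw [hSr (s * rplus t) t, mul_assoc, rplus_mul_self]
      · intro s t hst
        have h1 := rle_rstar_eq hst
        have hA : φ (rstar s) * rstar (φ s) = rstar (φ s) := by
          have h2 := rle_rstar_eq (hPM2 s)
          rw [proj_rstar (isProj_rstar (φ s))] at h2
          exact h2.symm
        have hB : rstar (φ (rstar s)) * rstar (φ s) = rstar (φ s) := by
          rw [← rstar_mul_rstar, hA, proj_rstar (isProj_rstar (φ s))]
        have hSr' : φ t * φ (rstar s) = φ s * rstar (φ (rstar s)) := by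
          rw [hSr t (rstar s), ← h1]
        refine ⟨rstar (φ s), isProj_rstar _, ?_⟩
        calc φ s = φ s * rstar (φ s) := (mul_rstar_self _).symm
          _ = φ s * (rstar (φ (rstar s)) * rstar (φ s)) := by rw [hB]
          _ = (φ s * rstar (φ (rstar s))) * rstar (φ s) := by rw [mul_assoc]
          _ = (φ t * φ (rstar s)) * rstar (φ s) := by rw [hSr']
          _ = φ t * (φ (rstar s) * rstar (φ s)) := by rw [mul_assoc]
          _ = φ t * rstar (φ s) := by rw [hA]
    · rintro ⟨hLSr, hOP⟩
      intro s t
      apply rle_antisymm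
      · have h1 := rle_mul_left (φ s) (rle_mul_right (φ t) (hPM3 t))
        rw [rplus_mul_self] at h1
        have h2 := rle_mul_right (φ t) (hPM1 s (rplus t))
        rw [mul_assoc] at h2
        have h3 := rle_trans h1 h2
        rwa [hLSr s t] at h3
      · rw [← hLSr s t]
        exact rle_mul_right (φ t) (hOP _ _ ⟨rplus t, isProj_rplus t, rfl⟩)
  have hpart2 : (∀ s t : S, φ s * φ t = rplus (φ s) * φ (s * t)) ↔
      ((∀ s t : S, φ s * φ (rstar s * t) = rplus (φ s) * φ (s * t)) ∧
        (∀ s t : S, rle s t → rle (φ s) (φ t))) := by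
    constructor
    · intro hSl
      constructor
      · intro s t
        rw [hSl s (rstar s * t), ← mul_assoc, mul_rstar_self]
      · intro s t hst
        have h1 := rle_rplus_eq hst
        have hA : rplus (φ s) * φ (rplus s) = rplus (φ s) := by
          have h2 := rle_rplus_eq (hPM3 s)
          rw [proj_rplus (isProj_rplus (φ s))] at h2
          exact h2.symm
        have hB : rplus (φ s) * rplus (φ (rplus s)) = rplus (φ s) := by
          rw [← rplus_rplus_mul, hA, proj_rplus (isProj_rplus (φ s))]
        have hSl' : φ (rplus s) * φ t = rplus (φ (rplus s)) * φ s := by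
          rw [hSl (rplus s) t, ← h1]
        apply rle_of_left (isProj_rplus (φ s))
        calc φ s = rplus (φ s) * φ s := (rplus_mul_self _).symm
          _ = (rplus (φ s) * rplus (φ (rplus s))) * φ s := by rw [hB]
          _ = rplus (φ s) * (rplus (φ (rplus s)) * φ s) := by rw [mul_assoc]
          _ = rplus (φ s) * (φ (rplus s) * φ t) := by rw [hSl']
          _ = (rplus (φ s) * φ (rplus s)) * φ t := by rw [mul_assoc]
          _ = rplus (φ s) * φ t := by rw [hA]
    · rintro ⟨hLSl, hOP⟩
      intro s t
      apply rle_antisymm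
      · have h1 := rle_mul_left (φ s) (rle_mul_right (φ t) (hPM2 s))
        rw [← mul_assoc, mul_rstar_self] at h1
        have h2 := rle_mul_left (φ s) (hPM1 (rstar s) t)
        have h3 := rle_trans h1 h2
        rwa [hLSl s t] at h3
      · rw [← hLSl s t]
        exact rle_mul_left (φ s) (hOP _ _ (rle_of_left (isProj_rstar s) rfl))
  refine ⟨hpart1, hpart2, ?_⟩
  constructor
  · rintro ⟨hSr, hSl⟩
    obtain ⟨hLSr, hOP⟩ := hpart1.mp hSr
    obtain ⟨hLSl, -⟩ := hpart2.mp hSl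
    exact ⟨hLSr, hLSl, hOP⟩
  · rintro ⟨hLSr, hLSl, hOP⟩
    exact ⟨hpart1.mpr ⟨hLSr, hOP⟩, hpart2.mpr ⟨hLSl, hOP⟩⟩
end

section
/- Let ψ: T → S be a proper morphism between restriction semigroups, let s, t ∈ S satisfy s ∼ t, and let e ∈ P(T). If e ≤ u^* and e ≤ v^* for some u, v ∈ T with ψ(u) ≤ s and ψ(v) ≤ t, then (u e)^+ = (v e)^+. (In particular this holds when ψ(u) = s and ψ(v) = t; i.e., if e lies in the domains of both ψ̂_s and ψ̂_t, or of both ψ̃_s and ψ̃_t, then the corresponding values agree.) -/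
open RestrictionSemigroup

section Helpers
variable {S : Type*} [RestrictionSemigroup S]

lemma rstar_rstar (x : S) : rstar (rstar x) = rstar x := by
  rw [← rplus_rstar x, rstar_rplus, rplus_rstar]

lemma rstar_idem (x : S) : rstar x * rstar x = rstar x := by
  rw [← rstar_mul_rstar x x, mul_rstar_self]

/-- If `e` is a projection with `e ≤ x^*`, then `x^* e = e`. -/
lemma rstar_mul_of_rle {e x : S} (h : rle e (rstar x)) : rstar x * e = e := by
  obtain ⟨f, _, hef⟩ := h
  rw [hef, ← mul_assoc, rstar_idem]

/-- If `e` is a projection with `e ≤ x^*`, then `(x e)^* = e`. -/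
lemma rstar_mul_proj {e x : S} (he : IsProj e) (h : rle e (rstar x)) :
    rstar (x * e) = e := by
  obtain ⟨e0, he0⟩ := he
  rw [← he0, rstar_mul_rstar, he0, rstar_mul_of_rle h]

end Helpers

theorem stmt17 {T S : Type*} [RestrictionSemigroup T] [RestrictionSemigroup S]
    (ψ : T → S) (hsurj : Function.Surjective ψ)
    (hmul : ∀ a b : T, ψ (a * b) = ψ a * ψ b)
    (hstar : ∀ a : T, ψ (rstar a) = rstar (ψ a))
    (hplus : ∀ a : T, ψ (rplus a) = rplus (ψ a))
    (hproper : ∀ a b : T, ψ a = ψ b → compat a b)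
    (s t : S) (hst : compat s t)
    (e : T) (he : IsProj e) (u v : T)
    (hu : rle e (rstar u)) (hv : rle e (rstar v))
    (hus : rle (ψ u) s) (hvt : rle (ψ v) t) :
    rplus (u * e) = rplus (v * e) := by
  -- `(u e)^* = e` and `(v e)^* = e`
  have hue : rstar (u * e) = e := rstar_mul_proj he hu
  have hve : rstar (v * e) = e := rstar_mul_proj he hv
  -- `ψ u` and `ψ v` are star-compatible
  have key : ψ u * rstar (ψ v) = ψ v * rstar (ψ u) := by
    obtain ⟨f1, ⟨g1, hg1⟩, hu1⟩ := hus
    obtain ⟨f2, ⟨g2, hg2⟩, hv1⟩ := hvt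
    subst hg1; subst hg2
    rw [hu1, hv1, rstar_mul_rstar, rstar_mul_rstar]
    calc s * rstar g1 * (rstar t * rstar g2)
        = s * (rstar g1 * rstar t) * rstar g2 := by simp only [mul_assoc]
      _ = s * (rstar t * rstar g1) * rstar g2 := by rw [rstar_comm]
      _ = s * rstar t * (rstar g1 * rstar g2) := by simp only [mul_assoc]
      _ = t * rstar s * (rstar g2 * rstar g1) := by rw [hst.1, rstar_comm]
      _ = t * (rstar g2 * rstar s) * rstar g1 := by
            rw [rstar_comm g2 s]; simp only [mul_assoc]
      _ = t * rstar g2 * (rstar s * rstar g1) := by simp only [mul_assoc]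
  -- `ψ e ≤ (ψ u)^*`, `ψ e ≤ (ψ v)^*`
  have hpu : rstar (ψ u) * ψ e = ψ e := by
    have := congrArg ψ (rstar_mul_of_rle hu)
    rwa [hmul, hstar] at this
  have hpv : rstar (ψ v) * ψ e = ψ e := by
    have := congrArg ψ (rstar_mul_of_rle hv)
    rwa [hmul, hstar] at this
  -- `ψ (u e) = ψ (v e)`
  have hψ : ψ (u * e) = ψ (v * e) := by
    rw [hmul, hmul]
    conv_lhs => rw [← hpv]
    rw [← mul_assoc, key, mul_assoc, hpu]
  -- properness gives `u e = v e`
  have hcomp := (hproper _ _ hψ).1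
  rw [hue, hve] at hcomp
  rw [show u * e = v * e from ?_]
  obtain ⟨e0, he0⟩ := he
  have hee : e * e = e := by rw [← he0, rstar_idem]
  calc u * e = u * e * e := by rw [mul_assoc, hee]
    _ = v * e * e := hcomp
    _ = v * e := by rw [mul_assoc, hee]
end
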